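/- Let F be a field, n ≥ 2, a an n × n matrix over F, t ∈ F, and 1 ≤ i, j ≤ n with i ≠ j. Then A_{ji}(a + t·e_{ij}) = A_{ji}(a) − t·det(a^{{ij}}), where a^{{ij}} denotes the (n−2) × (n−2) submatrix of a obtained by deleting rows i, j and columns i, j. -/

import Mathlib

open Matrix

/-- The submatrix of `x` obtained by deleting row `i` and column `j`. -/
def deleteRowCol {F : Type*} [Field F] {n : ℕ}
    (x : Matrix (Fin (n + 1)) (Fin (n + 1)) F) (i j : Fin (n + 1)) :
    Matrix (Fin n) (Fin n) F :=
  x.submatrix i.succAbove j.succAbove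

/-- The `(i, j)`-cofactor `A_{ij}(x) = (-1)^(i+j) * det (x (i | j))` of a square matrix `x`. -/
def cofactor {F : Type*} [Field F] {n : ℕ}
    (x : Matrix (Fin (n + 1)) (Fin (n + 1)) F) (i j : Fin (n + 1)) : F :=
  (-1 : F) ^ ((i : ℕ) + (j : ℕ)) * (deleteRowCol x i j).det

/-- Coe description of `succAbove`. -/
lemma succAbove_coe_cases {n : ℕ} (p : Fin (n + 2)) (k : Fin (n + 1)) :
    ((k : ℕ) < (p : ℕ) ∧ ((p.succAbove k : ℕ) = (k : ℕ))) ∨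
      ((p : ℕ) ≤ (k : ℕ) ∧ ((p.succAbove k : ℕ) = (k : ℕ) + 1)) := by
  rcases lt_or_ge (Fin.castSucc k) p with h | h
  · left
    refine ⟨h, ?_⟩
    rw [Fin.succAbove_of_castSucc_lt _ _ h, Fin.coe_castSucc]
  · right
    refine ⟨h, ?_⟩
    rw [Fin.succAbove_of_le_castSucc _ _ h, Fin.val_succ]

/-- Commutation of two `succAbove`s deleting the same pair of indices. -/
lemma succAbove_comm_aux {n : ℕ} (i j : Fin (n + 2)) (i' j' : Fin (n + 1))
    (hi' : j.succAbove i' = i) (hj' : i.succAbove j' = j) :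
    j.succAbove ∘ i'.succAbove = i.succAbove ∘ j'.succAbove := by
  have hmono1 : StrictMono (j.succAbove ∘ i'.succAbove) :=
    (Fin.strictMono_succAbove j).comp (Fin.strictMono_succAbove i')
  have hmono2 : StrictMono (i.succAbove ∘ j'.succAbove) :=
    (Fin.strictMono_succAbove i).comp (Fin.strictMono_succAbove j')
  have hij : i ≠ j := by
    rw [← hj']; exact (Fin.succAbove_ne i j').symm
  have hrange : ∀ (p : Fin (n + 2)) (q : Fin (n + 1)) (x : Fin (n + 2)),
      x ∈ Set.range (p.succAbove ∘ q.succAbove) ↔ x ≠ p ∧ x ≠ p.succAbove q := by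
    intro p q x
    constructor
    · rintro ⟨y, rfl⟩
      exact ⟨Fin.succAbove_ne p _, fun h =>
        Fin.succAbove_ne q y (Fin.succAbove_right_injective h)⟩
    · rintro ⟨h1, h2⟩
      obtain ⟨z, hz⟩ := Fin.exists_succAbove_eq h1
      have hzq : z ≠ q := fun h => h2 (by rw [← hz, h])
      obtain ⟨w, hw⟩ := Fin.exists_succAbove_eq hzq
      exact ⟨w, by simp [Function.comp, hw, hz]⟩
  apply (StrictMono.range_inj hmono1 hmono2).mp
  ext x
  rw [hrange, hrange, hi', hj']
  tauto

theorem cofactor_add_stdBasisMatrix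
    {F : Type*} [Field F] {n : ℕ}
    (a : Matrix (Fin (n + 2)) (Fin (n + 2)) F) (t : F)
    (i j : Fin (n + 2)) (hij : i ≠ j)
    (j' : Fin (n + 1)) (hj' : i.succAbove j' = j) :
    cofactor (a + Matrix.single i j t) j i
      = cofactor a j i - t * (deleteRowCol (deleteRowCol a i i) j' j').det := by
  obtain ⟨i', hi'⟩ := Fin.exists_succAbove_eq hij
  set B := deleteRowCol a j i with hBdef
  -- the perturbed minor as an updateRow
  have hB : deleteRowCol (a + Matrix.single i j t) j i
      = B.updateRow i' (B i' + Pi.single j' t) := by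
    ext r c
    simp only [deleteRowCol, submatrix_apply, Matrix.add_apply, updateRow_apply, Pi.add_apply,
      Pi.single_apply, hBdef]
    by_cases hr : r = i'
    · subst hr
      rw [hi']
      simp only [if_pos rfl, Matrix.single]
      by_cases hc : c = j'
      · subst hc; rw [hj']; simp
      · have h2 : j ≠ i.succAbove c := by
          rw [← hj']; exact fun h => hc (Fin.succAbove_right_injective h).symm
        simp [hc, h2]
    · have : i ≠ j.succAbove r := by
        rw [← hi']; exact fun h => hr (Fin.succAbove_right_injective h.symm)
      simp [Matrix.single, Matrix.of_apply, this, hr]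
  -- determinant of updateRow with Pi.single
  have hsingle : (B.updateRow i' (Pi.single j' (1 : F))).det
      = (-1 : F) ^ ((i' : ℕ) + (j' : ℕ)) * (deleteRowCol (deleteRowCol a i i) j' j').det := by
    rw [Matrix.det_succ_row _ i']
    rw [Finset.sum_eq_single j']
    · rw [updateRow_self]
      simp only [Pi.single_eq_same, mul_one]
      congr 1
      have hsub : (B.updateRow i' (Pi.single j' (1 : F))).submatrix i'.succAbove j'.succAbove
          = B.submatrix i'.succAbove j'.succAbove := Matrix.submatrix_updateRow_succAbove B (Pi.single j' (1 : F)) j'.succAbove i'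
      rw [hsub, hBdef]
      simp only [deleteRowCol, Matrix.submatrix_submatrix]
      rw [succAbove_comm_aux i j i' j' hi' hj']
    · intro c _ hc
      rw [updateRow_self]
      simp [Pi.single_apply, hc]
    · intro h; exact absurd (Finset.mem_univ j') h
  -- the sign
  have hodd : Odd ((j : ℕ) + (i : ℕ) + ((i' : ℕ) + (j' : ℕ))) := by
    have h1 := succAbove_coe_cases j i'
    have h2 := succAbove_coe_cases i j'
    rw [hi'] at h1
    rw [hj'] at h2
    rw [Nat.odd_iff]
    omega
  have hsign : (-1 : F) ^ ((j : ℕ) + (i : ℕ)) * (-1 : F) ^ ((i' : ℕ) + (j' : ℕ)) = -1 := by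
    rw [← pow_add]
    exact Odd.neg_one_pow hodd
  -- put it together
  have hps : (Pi.single j' t : Fin (n + 1) → F) = t • (Pi.single j' (1 : F) : Fin (n + 1) → F) := by
    ext c
    simp [Pi.single_apply, mul_comm]
  unfold cofactor
  rw [hB, hps, Matrix.det_updateRow_add, Matrix.det_updateRow_smul, Matrix.updateRow_eq_self,
    hsingle]
  linear_combination (t * (deleteRowCol (deleteRowCol a i i) j' j').det) * hsign
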